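/- Let n be a positive integer such that p = 4n−1 is prime, let M = ⌊n²/p⌋, and for integers m ≥ 0 set Q_m = 1/2 + (1/2)·√(4mp + 3p − 4) and R_m = √(mp). If M ≥ 1, then R_{M−1} < n−1 < Q_M and R_{M−1} < n−2 < Q_{M−1}. -/

import Mathlib

/-- Lemma 7(ii),(iii): if `M ≥ 1` then `R_{M-1} < n-1 < Q_M` and
`R_{M-1} < n-2 < Q_{M-1}`. -/
theorem stmt_9 (n : ℤ) (hn : 0 < n) (p : ℤ) (hp : p = 4 * n - 1) (hpp : Prime p)
    (M : ℤ) (hM : M = n ^ 2 / p)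
    (Q R : ℤ → ℝ)
    (hQ : ∀ m, Q m = 1 / 2 + Real.sqrt (4 * (m : ℝ) * (p : ℝ) + 3 * (p : ℝ) - 4) / 2)
    (hR : ∀ m, R m = Real.sqrt ((m : ℝ) * (p : ℝ)))
    (hM1 : 1 ≤ M) :
    (R (M - 1) < (n : ℝ) - 1 ∧ ((n : ℝ) - 1 < Q M)) ∧
    (R (M - 1) < (n : ℝ) - 2 ∧ ((n : ℝ) - 2 < Q (M - 1))) := by
  subst hp
  have hp0 : (0:ℤ) < 4 * n - 1 := by omega
  set r := n ^ 2 % (4 * n - 1) with hrdef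
  have hr0 : 0 ≤ r := Int.emod_nonneg _ (by omega)
  have hrp : r < 4 * n - 1 := Int.emod_lt_of_pos _ hp0
  have hsum : (4 * n - 1) * M + r = n ^ 2 := by
    rw [hM, hrdef]; exact Int.mul_ediv_add_emod _ _
  have key : 16 * r = (4 * n - 1) * (4 * n - 16 * M + 1) + 1 := by
    linear_combination 16 * hsum
  have h16 : (4 * n - 1) * (4 * n - 16 * M + 1) < (4 * n - 1) * 16 := by nlinarith
  have ht16 : 4 * n - 16 * M + 1 < 16 := lt_of_mul_lt_mul_left h16 (by omega)
  have ht : 4 * n - 16 * M + 1 ≤ 13 := by omega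
  have hpt : (4 * n - 1) * (4 * n - 16 * M + 1) ≤ (4 * n - 1) * 13 :=
    mul_le_mul_of_nonneg_left ht (by omega)
  have rbound : 16 * r ≤ 13 * (4 * n - 1) + 1 := by nlinarith
  have hMn : (4 * n - 1) * 1 ≤ (4 * n - 1) * M :=
    mul_le_mul_of_nonneg_left hM1 (by omega)
  have hn4 : 4 ≤ n := by
    by_contra h
    push_neg at h
    interval_cases n <;> omega
  have hn5 : 5 ≤ n := by
    rcases eq_or_lt_of_le hn4 with h | h
    · exfalso; rw [← h] at hpp; norm_num at hpp
    · omega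
  have hr7 : r < 4 * n - 7 := by
    rcases lt_or_ge n 9 with h9 | h9
    · interval_cases n
      · omega
      · omega
      · exfalso; norm_num at hpp
      · omega
    · omega
  -- integer inequalities
  have I1 : (M - 1) * (4 * n - 1) < (n - 2) ^ 2 := by nlinarith
  have I2 : (2 * n - 3) ^ 2 < 4 * M * (4 * n - 1) + 3 * (4 * n - 1) - 4 := by nlinarith
  have I3 : (2 * n - 5) ^ 2 < 4 * (M - 1) * (4 * n - 1) + 3 * (4 * n - 1) - 4 := by nlinarith
  have hRlt : R (M - 1) < (n : ℝ) - 2 := by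
    have hn5R : (5:ℝ) ≤ (n:ℝ) := by exact_mod_cast hn5
    rw [hR]
    push_cast
    rw [Real.sqrt_lt' (by linarith)]
    have I1' := (Int.cast_lt (R := ℝ)).mpr I1
    push_cast at I1'
    linarith
  have hQM : (n : ℝ) - 1 < Q M := by
    rw [hQ]
    push_cast
    have h2 : 2 * (n:ℝ) - 3 < Real.sqrt (4 * (M:ℝ) * (4 * (n:ℝ) - 1) + 3 * (4 * (n:ℝ) - 1) - 4) := by
      apply Real.lt_sqrt_of_sq_lt
      have cast2 : ((2 * n - 3 : ℤ) : ℝ) ^ 2 < ((4 * M * (4 * n - 1) + 3 * (4 * n - 1) - 4 : ℤ) : ℝ) := by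
        exact_mod_cast I2
      push_cast at cast2
      nlinarith [cast2]
    linarith
  have hQM1 : (n : ℝ) - 2 < Q (M - 1) := by
    rw [hQ]
    push_cast
    have h2 : 2 * (n:ℝ) - 5 < Real.sqrt (4 * ((M:ℝ) - 1) * (4 * (n:ℝ) - 1) + 3 * (4 * (n:ℝ) - 1) - 4) := by
      apply Real.lt_sqrt_of_sq_lt
      have cast3 : ((2 * n - 5 : ℤ) : ℝ) ^ 2 < ((4 * (M - 1) * (4 * n - 1) + 3 * (4 * n - 1) - 4 : ℤ) : ℝ) := by
        exact_mod_cast I3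
      push_cast at cast3
      nlinarith [cast3]
    linarith
  exact ⟨⟨by linarith, hQM⟩, hRlt, hQM1⟩
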